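/- arXiv:2109.14135 — 5 statements merged into one kernel-verified Lean document; each statement's English description precedes it below -/
import Mathlib

section
/- Let $\bar{L} \in \mathbb{R}^{n\times n}$ be a graph Laplacian (nonpositive off-diagonal entries, zero row sums). If $b \in [0,1]^n$ and $o \in \mathbb{R}^n$ satisfies $(\bar{L}+I_n)o = b$, then $o \in [0,1]^n$, i.e., every entry of the solution lies in $[0,1]$. -/
open Matrix Filter

noncomputable def specRadius {n : ℕ} (M : Matrix (Fin n) (Fin n) ℝ) : ℝ :=
  sSup ((fun z : ℂ => ‖z‖) '' spectrum ℂ (M.map (Complex.ofReal)))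

noncomputable def specAbscissa {n : ℕ} (M : Matrix (Fin n) (Fin n) ℝ) : ℝ :=
  sSup (Complex.re '' spectrum ℂ (M.map (Complex.ofReal)))

def MatIrreducible {n : ℕ} (M : Matrix (Fin n) (Fin n) ℝ) : Prop :=
  ∀ S : Set (Fin n), S.Nonempty → S ≠ Set.univ → ∃ i ∈ S, ∃ j ∉ S, M i j ≠ 0

def IsLaplacian {n : ℕ} (L : Matrix (Fin n) (Fin n) ℝ) : Prop :=
  (∀ i j, i ≠ j → L i j ≤ 0) ∧ (∀ i, ∑ j, L i j = 0)

def IsMetzler {n : ℕ} (M : Matrix (Fin n) (Fin n) ℝ) : Prop :=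
  ∀ i j, i ≠ j → 0 ≤ M i j

lemma aux_upper {n : ℕ} (L : Matrix (Fin n) (Fin n) ℝ)
    (hL : IsLaplacian L) (b o : Fin n → ℝ)
    (hb : ∀ i, b i ≤ 1)
    (ho : (L + 1).mulVec o = b) :
    ∀ i, o i ≤ 1 := by
  intro i
  obtain ⟨m, -, hm⟩ := Finset.exists_max_image Finset.univ o ⟨i, Finset.mem_univ i⟩
  have hmi : o i ≤ o m := hm i (Finset.mem_univ i)
  have heq : ∑ j, (L m j + (1 : Matrix (Fin n) (Fin n) ℝ) m j) * o j = b m := by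
    have := congrFun ho m
    simpa [Matrix.mulVec, dotProduct, Matrix.add_apply] using this
  have hone : ∀ j, (1 : Matrix (Fin n) (Fin n) ℝ) m j = if m = j then 1 else 0 := by
    intro j; simp [Matrix.one_apply]
  have heq2 : (∑ j, L m j * o j) + o m = b m := by
    rw [← heq]
    simp [add_mul, Finset.sum_add_distrib, Matrix.one_apply, ite_mul, Finset.sum_ite_eq]
  have hsum : 0 ≤ ∑ j, L m j * o j := by
    have : ∑ j, L m j * o j = ∑ j, L m j * (o j - o m) := by
      have hz : ∑ j, L m j * o m = 0 := by
        rw [← Finset.sum_mul, hL.2 m, zero_mul]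
      rw [Finset.sum_congr rfl (fun j _ => by ring_nf : ∀ j ∈ Finset.univ, L m j * (o j - o m) = L m j * o j - L m j * o m)] at *
      rw [Finset.sum_sub_distrib, hz, sub_zero]
    rw [this]
    apply Finset.sum_nonneg
    intro j _
    rcases eq_or_ne m j with h | h
    · simp [h]
    · nlinarith [hL.1 m j h, hm j (Finset.mem_univ j)]
  calc o i ≤ o m := hmi
    _ ≤ b m := by linarith
    _ ≤ 1 := hb m

/-- `(L̄ + I)⁻¹` preserves the box `[0,1]ⁿ`. -/
theorem laplacian_plus_id_box_preserving {n : ℕ} (L : Matrix (Fin n) (Fin n) ℝ)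
    (hL : IsLaplacian L) (b o : Fin n → ℝ)
    (hb : ∀ i, b i ∈ Set.Icc (0:ℝ) 1)
    (ho : (L + 1).mulVec o = b) :
    ∀ i, o i ∈ Set.Icc (0:ℝ) 1 := by
  have hupper := aux_upper L hL b o (fun i => (hb i).2) ho
  have hlower : ∀ i, (fun j => 1 - o j) i ≤ 1 := by
    apply aux_upper L hL (fun j => 1 - b j) _ (fun i => by show 1 - b i ≤ 1; linarith [(hb i).1])
    funext k
    have h1 : (L + 1).mulVec (fun _ => (1:ℝ)) k = 1 := by
      simp [Matrix.mulVec, dotProduct, Matrix.add_apply, Matrix.one_apply,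
        Finset.sum_add_distrib, hL.2 k]
    have h2 := congrFun ho k
    simp only [Matrix.mulVec, dotProduct, Matrix.add_apply] at h1 h2 ⊢
    have : ∀ j, (L k j + (1 : Matrix (Fin n) (Fin n) ℝ) k j) * (1 - o j)
        = (L k j + (1 : Matrix (Fin n) (Fin n) ℝ) k j) * 1
          - (L k j + (1 : Matrix (Fin n) (Fin n) ℝ) k j) * o j := by
      intro j; ring
    rw [Finset.sum_congr rfl (fun j _ => this j), Finset.sum_sub_distrib, h1, h2]
  intro i
  refine ⟨?_, hupper i⟩
  have := hlower i
  simp only at this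
  linarith
end

section
/- For all $t \ge 0$ and all $o(t) \in [0,1]^n$, the effective reproduction number satisfies $R_{\min}(t) \le R_o(t) \le R_{\max}(t)$, where $R_{\min}(t) = \rho(G(\mathbf{1}_n)^{-1}\tilde{S}(t)B(\mathbf{1}_n))$ and $R_{\max}(t) = \rho(G(\mathbf{0})^{-1}\tilde{S}(t)B(\mathbf{0}))$. -/
open Matrix Filter

section aux

attribute [local instance] Matrix.linftyOpNormedRing Matrix.linftyOpNormedAlgebra
  Matrix.linftyOpNormedAddCommGroup

open ENNReal

lemma pow_entry_bounds {n : ℕ} {A B : Matrix (Fin n) (Fin n) ℝ}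
    (hA : ∀ i j, 0 ≤ A i j) (hAB : ∀ i j, A i j ≤ B i j) (k : ℕ) :
    ∀ i j, 0 ≤ (A ^ k) i j ∧ (A ^ k) i j ≤ (B ^ k) i j := by
  induction k with
  | zero =>
    intro i j
    simp only [pow_zero, Matrix.one_apply]
    constructor
    · split <;> norm_num
    · exact le_refl _
  | succ k ih =>
    intro i j
    rw [pow_succ, pow_succ, Matrix.mul_apply, Matrix.mul_apply]
    constructor
    · exact Finset.sum_nonneg fun l _ => mul_nonneg (ih i l).1 (hA l j)
    · refine Finset.sum_le_sum fun l _ => ?_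
      exact mul_le_mul (ih i l).2 (hAB l j) (hA l j) (le_trans (ih i l).1 (ih i l).2)

lemma nnnorm_map_le {n : ℕ} {A B : Matrix (Fin n) (Fin n) ℝ}
    (hA : ∀ i j, 0 ≤ A i j) (hAB : ∀ i j, A i j ≤ B i j) :
    ‖A.map (Complex.ofReal)‖₊ ≤ ‖B.map (Complex.ofReal)‖₊ := by
  rw [Matrix.linfty_opNNNorm_def, Matrix.linfty_opNNNorm_def]
  refine Finset.sup_mono_fun fun i _ => Finset.sum_le_sum fun j _ => ?_
  simp only [Matrix.map_apply]
  refine NNReal.coe_le_coe.mp ?_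
  simp only [coe_nnnorm, Complex.norm_real, Real.norm_eq_abs]
  exact abs_le_abs (hAB i j) (by linarith [hA i j, hAB i j])

lemma specRadius_mono {n : ℕ} {A B : Matrix (Fin n) (Fin n) ℝ}
    (hA : ∀ i j, 0 ≤ A i j) (hAB : ∀ i j, A i j ≤ B i j) :
    specRadius A ≤ specRadius B := by
  rcases Nat.eq_zero_or_pos n with hn | hn
  · subst hn
    have h2 : ∀ M : Matrix (Fin 0) (Fin 0) ℝ,
        spectrum ℂ (M.map (Complex.ofReal)) = ∅ := by
      intro M
      ext z
      simp only [Set.mem_empty_iff_false, iff_false, spectrum.mem_iff, not_not]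
      exact isUnit_of_subsingleton _
    unfold specRadius
    rw [h2, h2]
  · haveI : Nonempty (Fin n) := Fin.pos_iff_nonempty.mp hn
    set Ac := A.map (Complex.ofReal) with hAc
    set Bc := B.map (Complex.ofReal) with hBc
    -- map commutes with pow
    have hmap : ∀ (M : Matrix (Fin n) (Fin n) ℝ) (k : ℕ),
        (M.map (Complex.ofReal)) ^ k = (M ^ k).map (Complex.ofReal) := by
      intro M k
      have : M.map (Complex.ofReal) = Complex.ofRealHom.mapMatrix M := rfl
      rw [this, ← map_pow]
      rfl
    -- spectral radius comparison via Gelfand's formula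
    have hsr : spectralRadius ℂ Ac ≤ spectralRadius ℂ Bc := by
      refine le_of_tendsto_of_tendsto'
        (spectrum.pow_nnnorm_pow_one_div_tendsto_nhds_spectralRadius Ac)
        (spectrum.pow_nnnorm_pow_one_div_tendsto_nhds_spectralRadius Bc) fun k => ?_
      refine ENNReal.rpow_le_rpow ?_ (by positivity)
      rw [hAc, hBc, hmap, hmap]
      exact_mod_cast nnnorm_map_le (fun i j => (pow_entry_bounds hA hAB k i j).1)
        (fun i j => (pow_entry_bounds hA hAB k i j).2)
    obtain ⟨w, hw, hweq⟩ := spectrum.exists_nnnorm_eq_spectralRadius Bc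
    have hbdd : BddAbove ((fun z : ℂ => ‖z‖) '' spectrum ℂ Bc) :=
      ((spectrum.isCompact Bc).image continuous_norm).bddAbove
    have hwle : ‖w‖ ≤ specRadius B := le_csSup hbdd ⟨w, hw, rfl⟩
    refine Real.sSup_le ?_ (le_trans (norm_nonneg w) hwle)
    rintro x ⟨z, hz, rfl⟩
    have h1 : (‖z‖₊ : ENNReal) ≤ spectralRadius ℂ Ac := by
      rw [spectralRadius]
      exact le_iSup₂ (f := fun k (_ : k ∈ spectrum ℂ Ac) => (‖k‖₊ : ENNReal)) z hz
    have h2 : (‖z‖₊ : ENNReal) ≤ (‖w‖₊ : ENNReal) := by rw [hweq]; exact h1.trans hsr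
    have h3 : ‖z‖ ≤ ‖w‖ := by exact_mod_cast h2
    calc ‖z‖ = ‖z‖ := rfl
      _ ≤ ‖w‖ := h3
      _ = ‖w‖ := rfl
      _ ≤ specRadius B := hwle

end aux

theorem effective_R_bounds {n : ℕ}
    (β : Fin n → Fin n → ℝ) (γ : Fin n → ℝ) (βmin γmin : ℝ)
    (hβmin : 0 < βmin) (hγmin : 0 < γmin)
    (hβ : ∀ i j, β i j = 0 ∨ βmin ≤ β i j) (hγ : ∀ i, γmin ≤ γ i)
    (hBirr : MatIrreducible (Matrix.of β))
    (s : Fin n → ℝ) (hs : ∀ i, s i ∈ Set.Icc (0:ℝ) 1)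
    (o : Fin n → ℝ) (ho : ∀ i, o i ∈ Set.Icc (0:ℝ) 1)
    (Bo : (Fin n → ℝ) → Matrix (Fin n) (Fin n) ℝ)
    (hBo : ∀ w i j, Bo w i j = β i j - (β i j - (if β i j = 0 then 0 else βmin)) * w i)
    (g : (Fin n → ℝ) → Fin n → ℝ) (hg : ∀ w i, g w i = γmin + (γ i - γmin) * w i) :
    specRadius (Matrix.of fun i j => s i * Bo (fun _ => 1) i j / g (fun _ => 1) i)
      ≤ specRadius (Matrix.of fun i j => s i * Bo o i j / g o i) ∧
    specRadius (Matrix.of fun i j => s i * Bo o i j / g o i)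
      ≤ specRadius (Matrix.of fun i j => s i * Bo (fun _ => 0) i j / g (fun _ => 0) i) := by
  have hbase : ∀ i j, 0 ≤ (if β i j = 0 then (0:ℝ) else βmin) ∧
      (if β i j = 0 then (0:ℝ) else βmin) ≤ β i j := by
    intro i j
    rcases hβ i j with h | h
    · simp [h]
    · have hne : β i j ≠ 0 := by intro h0; rw [h0] at h; linarith
      rw [if_neg hne]
      exact ⟨le_of_lt hβmin, h⟩
  constructor
  · apply specRadius_mono
    · intro i j
      simp only [Matrix.of_apply, hBo, hg]
      obtain ⟨hb0, hbβ⟩ := hbase i j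
      apply div_nonneg
      · exact mul_nonneg (hs i).1 (by nlinarith)
      · nlinarith [hγ i]
    · intro i j
      simp only [Matrix.of_apply, hBo, hg]
      obtain ⟨hb0, hbβ⟩ := hbase i j
      obtain ⟨ho0, ho1⟩ := ho i
      obtain ⟨hs0, hs1⟩ := hs i
      have hγi := hγ i
      apply div_le_div₀
      · apply mul_nonneg hs0; nlinarith
      · apply mul_le_mul_of_nonneg_left _ hs0; nlinarith
      · nlinarith
      · nlinarith
  · apply specRadius_mono
    · intro i j
      simp only [Matrix.of_apply, hBo, hg]
      obtain ⟨hb0, hbβ⟩ := hbase i j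
      obtain ⟨ho0, ho1⟩ := ho i
      apply div_nonneg
      · exact mul_nonneg (hs i).1 (by nlinarith)
      · nlinarith [hγ i]
    · intro i j
      simp only [Matrix.of_apply, hBo, hg]
      obtain ⟨hb0, hbβ⟩ := hbase i j
      obtain ⟨ho0, ho1⟩ := ho i
      obtain ⟨hs0, hs1⟩ := hs i
      have hγi := hγ i
      apply div_le_div₀
      · apply mul_nonneg hs0; nlinarith
      · apply mul_le_mul_of_nonneg_left _ hs0; nlinarith
      · nlinarith
      · nlinarith
end

section
/- Let $M(t) = \tilde{S}(t)B(o(t)) - G(o(t))$ be the irreducible Metzler matrix governing $\dot{x}(t) = M(t)x(t)$, let $\sigma(t_p)$ be its spectral abscissa at time $t_p$, and let $p$ be the corresponding positive normalized left eigenvector, $p^\top M(t_p) = \sigma(t_p)\,p^\top$. If at time $t_p$ one has $\frac{d}{dt}\big(p^\top x(t)\big)\big|_{t=t_p} = 0$ and $x(t_p) \ne \mathbf{0}$ with $x(t_p) \ge \mathbf{0}$, then $\sigma(t_p) = 0$, and consequently $R_o(t_p) = \rho(G(o(t_p))^{-1}\tilde{S}(t_p)B(o(t_p))) = 1$. -/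
open Matrix Filter

/-- Spectrum membership for complex matrices via determinant. -/
lemma mem_spectrum_iff_det {n : ℕ} (A : Matrix (Fin n) (Fin n) ℂ) (μ : ℂ) :
    μ ∈ spectrum ℂ A ↔ (algebraMap ℂ (Matrix (Fin n) (Fin n) ℂ) μ - A).det = 0 := by
  rw [spectrum.mem_iff, Matrix.isUnit_iff_isUnit_det, isUnit_iff_ne_zero, not_ne_iff]

/-- at a stationary point of the weighted average infection
`pᵀx(t)` (with `p` the positive left eigenvector of `M = diag(s)B(o) - G(o)`
associated with its spectral abscissa), the spectral abscissa vanishes and the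
effective reproduction number equals one. -/
theorem peak_infection_time_threshold {n : ℕ}
    (s : Fin n → ℝ) (hs : ∀ i, 0 < s i)
    (Bo : Matrix (Fin n) (Fin n) ℝ) (hBonn : ∀ i j, 0 ≤ Bo i j)
    (hBoirr : MatIrreducible Bo)
    (g : Fin n → ℝ) (hg : ∀ i, 0 < g i)
    -- `M = diag(s) B(o) − G(o)`
    (M : Matrix (Fin n) (Fin n) ℝ)
    (hM : ∀ i j, M i j = s i * Bo i j - (if i = j then g i else 0))
    -- `p ≫ 0` is the normalized left eigenvector for the spectral abscissa of `M`
    (p : Fin n → ℝ) (hp : ∀ i, 0 < p i) (hpnorm : ∑ i, p i = 1)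
    (hpeig : ∀ j, ∑ i, p i * M i j = specAbscissa M * p j)
    (x : ℝ → Fin n → ℝ) (tp : ℝ)
    (hdyn : ∀ i, HasDerivAt (fun t => x t i) (∑ j, M i j * x tp j) tp)
    (hxnn : ∀ i, 0 ≤ x tp i) (hxne : x tp ≠ 0)
    (hstat : HasDerivAt (fun t => ∑ i, p i * x t i) 0 tp) :
    specAbscissa M = 0 ∧
      specRadius (Matrix.of fun i j => s i * Bo i j / g i) = 1 := by
  -- Part 1: the spectral abscissa vanishes.
  obtain ⟨j0, hj0⟩ := Function.ne_iff.mp hxne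
  have hderiv : HasDerivAt (fun t => ∑ i, p i * x t i)
      (∑ i, p i * ∑ j, M i j * x tp j) tp :=
    HasDerivAt.fun_sum fun i _ => (hdyn i).const_mul (p i)
  have hswap : ∑ i, p i * ∑ j, M i j * x tp j
      = specAbscissa M * ∑ j, p j * x tp j := by
    calc ∑ i, p i * ∑ j, M i j * x tp j
        = ∑ j, (∑ i, p i * M i j) * x tp j := by
          simp_rw [Finset.mul_sum, Finset.sum_mul, ← mul_assoc]
          exact Finset.sum_comm
      _ = ∑ j, specAbscissa M * (p j * x tp j) := by
          simp_rw [hpeig, mul_assoc]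
      _ = _ := (Finset.mul_sum _ _ _).symm
  have hS : 0 < ∑ j, p j * x tp j :=
    Finset.sum_pos' (fun j _ => mul_nonneg (hp j).le (hxnn j))
      ⟨j0, Finset.mem_univ _, mul_pos (hp j0) ((hxnn j0).lt_of_ne (Ne.symm hj0))⟩
  have hsigma : specAbscissa M = 0 := by
    have h0 : (0 : ℝ) = specAbscissa M * ∑ j, p j * x tp j := by
      rw [← hswap]; exact hstat.unique hderiv
    exact (mul_eq_zero.mp h0.symm).resolve_right hS.ne'
  refine ⟨hsigma, ?_⟩
  -- Part 2: the effective reproduction number equals one.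
  set A : Matrix (Fin n) (Fin n) ℝ := Matrix.of fun i j => s i * Bo i j / g i with hA
  set Ac : Matrix (Fin n) (Fin n) ℂ := A.map Complex.ofReal with hAc
  have hAnn : ∀ i j, 0 ≤ A i j := fun i j =>
    div_nonneg (mul_nonneg (hs i).le (hBonn i j)) (hg i).le
  -- the key identity: q = p * g is a positive left eigenvector of A with eigenvalue 1
  have hkey : ∀ j, ∑ i, (p i * g i) * A i j = p j * g j := by
    intro j
    have h1 : ∑ i, p i * M i j = 0 := by rw [hpeig j, hsigma, zero_mul]
    have h2 : ∑ i, p i * (s i * Bo i j) = p j * g j := by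
      simp_rw [hM, mul_sub, Finset.sum_sub_distrib, mul_ite, mul_zero,
        Finset.sum_ite_eq' Finset.univ j, Finset.mem_univ, if_true, sub_eq_zero] at h1
      exact h1
    rw [← h2]
    refine Finset.sum_congr rfl fun i _ => ?_
    have : g i ≠ 0 := (hg i).ne'
    simp only [hA, Matrix.of_apply]
    field_simp
  have hqc : ∀ j, ∑ i, (Complex.ofReal (p i * g i)) * Ac i j
      = Complex.ofReal (p j * g j) := by
    intro j
    rw [← hkey j]
    simp only [hAc, Matrix.map_apply]
    push_cast
    rfl
  -- 1 is in the spectrum of Ac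
  have hmem : (1 : ℂ) ∈ spectrum ℂ Ac := by
    rw [mem_spectrum_iff_det, ← Matrix.exists_vecMul_eq_zero_iff]
    refine ⟨fun i => Complex.ofReal (p i * g i), ?_, ?_⟩
    · intro h
      have := congrFun h j0
      simp only [Pi.zero_apply, Complex.ofReal_eq_zero] at this
      exact (mul_pos (hp j0) (hg j0)).ne' this
    · funext j
      have h1 : (algebraMap ℂ (Matrix (Fin n) (Fin n) ℂ)) 1 = 1 := _root_.map_one _
      simp only [Matrix.vecMul, dotProduct, Matrix.sub_apply, h1,
        Matrix.one_apply, mul_sub, Finset.sum_sub_distrib, mul_ite, mul_one, mul_zero,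
        Finset.sum_ite_eq' Finset.univ j, Finset.mem_univ, if_true, Pi.zero_apply]
      rw [hqc j, sub_self]
  -- every spectral value has modulus at most 1
  have hbound : ∀ μ ∈ spectrum ℂ Ac, ‖μ‖ ≤ 1 := by
    intro μ hμ
    rw [mem_spectrum_iff_det, ← Matrix.exists_mulVec_eq_zero_iff] at hμ
    obtain ⟨v, hv0, hv⟩ := hμ
    have heig : ∀ i, μ * v i = ∑ j, Ac i j * v j := by
      intro i
      have h := congrFun hv i
      simp only [Matrix.mulVec, dotProduct, Matrix.sub_apply,
        Matrix.algebraMap_eq_diagonal, Matrix.diagonal_apply, Pi.algebraMap_apply,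
        Algebra.algebraMap_self, RingHom.id_apply, sub_mul, Finset.sum_sub_distrib,
        ite_mul, zero_mul, Finset.sum_ite_eq Finset.univ i, Finset.mem_univ, if_true,
        Pi.zero_apply, sub_eq_zero] at h
      exact h
    obtain ⟨i0, hi0⟩ := Function.ne_iff.mp hv0
    set w : Fin n → ℝ := fun i => ‖v i‖ with hw
    have hwnn : ∀ i, 0 ≤ w i := fun i => norm_nonneg _
    have hwpos : 0 < ∑ i, (p i * g i) * w i :=
      Finset.sum_pos' (fun i _ => mul_nonneg (mul_pos (hp i) (hg i)).le (hwnn i))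
        ⟨i0, Finset.mem_univ _,
          mul_pos (mul_pos (hp i0) (hg i0)) (norm_pos_iff.mpr hi0)⟩
    have hineq : ∀ i, ‖μ‖ * w i ≤ ∑ j, A i j * w j := by
      intro i
      calc ‖μ‖ * w i = ‖μ * v i‖ := (norm_mul _ _).symm
        _ = ‖∑ j, Ac i j * v j‖ := by rw [heig i]
        _ ≤ ∑ j, ‖Ac i j * v j‖ :=
            norm_sum_le _ _
        _ = ∑ j, A i j * w j := by
            refine Finset.sum_congr rfl fun j _ => ?_
            rw [norm_mul]
            congr 1
            simp only [hAc, Matrix.map_apply, Complex.norm_real, Real.norm_eq_abs]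
            exact abs_of_nonneg (hAnn i j)
    have hchain : ‖μ‖ * ∑ i, (p i * g i) * w i ≤ ∑ i, (p i * g i) * w i := by
      calc ‖μ‖ * ∑ i, (p i * g i) * w i
          = ∑ i, (p i * g i) * (‖μ‖ * w i) := by
            rw [Finset.mul_sum]; exact Finset.sum_congr rfl fun i _ => by ring
        _ ≤ ∑ i, (p i * g i) * ∑ j, A i j * w j :=
            Finset.sum_le_sum fun i _ =>
              mul_le_mul_of_nonneg_left (hineq i) (mul_pos (hp i) (hg i)).le
        _ = ∑ j, (∑ i, (p i * g i) * A i j) * w j := by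
            simp_rw [Finset.mul_sum, Finset.sum_mul, ← mul_assoc]
            exact Finset.sum_comm
        _ = ∑ j, (p j * g j) * w j := by simp_rw [hkey]
    exact le_of_mul_le_mul_right (by linarith [hchain]) hwpos
  -- conclude
  have hradius : specRadius A = 1 := by
    unfold specRadius
    rw [← hAc]
    apply le_antisymm
    · exact Real.sSup_le (by rintro r ⟨μ, hμ, rfl⟩; exact hbound μ hμ) zero_le_one
    · refine le_csSup ⟨1, ?_⟩ ⟨1, hmem, norm_one⟩
      rintro r ⟨μ, hμ, rfl⟩
      exact hbound μ hμ
  exact hradius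
end

section
/- Suppose $x : [t_1, \infty) \to \mathbb{R}^n_{\ge 0}$ satisfies $\dot{x}(t) = M(t)x(t)$ where each $M(t)$ is Metzler and $M(t) \le \bar{M}$ entrywise for a fixed irreducible Metzler matrix $\bar{M}$ with spectral abscissa $\bar{\sigma}$ and positive left eigenvector $\bar{p}$ ($\bar{p}^\top \bar{M} = \bar{\sigma}\bar{p}^\top$, $\bar{p} \gg 0$). Then $\bar{p}^\top x(t) \le \bar{p}^\top x(t_1)\, e^{\bar{\sigma}(t - t_1)}$ for all $t \ge t_1$. In particular, if $\bar{\sigma} < 0$, then $x(t) \to \mathbf{0}$ exponentially fast. -/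
open Matrix Filter

/-- exponential upper bound on the weighted average infection, and
exponential extinction when the dominating spectral abscissa is negative. -/
theorem weighted_infection_exponential_upper_bound {n : ℕ}
    (t₁ : ℝ) (x : ℝ → Fin n → ℝ)
    (hxnn : ∀ t ≥ t₁, ∀ i, 0 ≤ x t i)
    (Mt : ℝ → Matrix (Fin n) (Fin n) ℝ)
    (hMetz : ∀ t ≥ t₁, IsMetzler (Mt t))
    (Mbar : Matrix (Fin n) (Fin n) ℝ) (hMbarMetz : IsMetzler Mbar)
    (hMbarirr : MatIrreducible Mbar)
    (hle : ∀ t ≥ t₁, ∀ i j, Mt t i j ≤ Mbar i j)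
    (p : Fin n → ℝ) (hp : ∀ i, 0 < p i)
    (hpeig : ∀ j, ∑ i, p i * Mbar i j = specAbscissa Mbar * p j)
    (hdyn : ∀ t ≥ t₁, ∀ i, HasDerivAt (fun τ => x τ i) (∑ j, Mt t i j * x t j) t) :
    (∀ t ≥ t₁, ∑ i, p i * x t i ≤
      (∑ i, p i * x t₁ i) * Real.exp (specAbscissa Mbar * (t - t₁))) ∧
    (specAbscissa Mbar < 0 → ∀ i, Tendsto (fun t => x t i) atTop (nhds 0)) := by
  set σ : ℝ := specAbscissa Mbar with hσdef
  set V : ℝ → ℝ := fun t => ∑ i, p i * x t i with hVdef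
  have hVderiv : ∀ t ≥ t₁, HasDerivAt V (∑ i, p i * ∑ j, Mt t i j * x t j) t := by
    intro t ht
    exact HasDerivAt.fun_sum fun i _ => (hdyn t ht i).const_mul (p i)
  have hVbound : ∀ t ≥ t₁, (∑ i, p i * ∑ j, Mt t i j * x t j) ≤ σ * V t := by
    intro t ht
    calc ∑ i, p i * ∑ j, Mt t i j * x t j
        = ∑ i, ∑ j, p i * Mt t i j * x t j := by
          simp [Finset.mul_sum, mul_assoc]
      _ = ∑ j, ∑ i, p i * Mt t i j * x t j := Finset.sum_comm
      _ = ∑ j, (∑ i, p i * Mt t i j) * x t j := by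
          simp [Finset.sum_mul]
      _ ≤ ∑ j, (σ * p j) * x t j := by
          refine Finset.sum_le_sum fun j _ => ?_
          refine mul_le_mul_of_nonneg_right ?_ (hxnn t ht j)
          rw [← hpeig j]
          exact Finset.sum_le_sum fun i _ =>
            mul_le_mul_of_nonneg_left (hle t ht i j) (hp i).le
      _ = σ * V t := by
          simp [hVdef, Finset.mul_sum, mul_assoc]
  set g : ℝ → ℝ := fun t => V t * Real.exp (-(σ * t)) with hgdef
  have hgderiv : ∀ t ≥ t₁, HasDerivAt g
      ((∑ i, p i * ∑ j, Mt t i j * x t j) * Real.exp (-(σ * t))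
        + V t * (-σ * Real.exp (-(σ * t)))) t := by
    intro t ht
    have h0 : HasDerivAt (fun s : ℝ => -(σ * s)) (-σ) t := by
      simpa using ((hasDerivAt_id t).const_mul σ).fun_neg
    have he : HasDerivAt (fun s : ℝ => Real.exp (-(σ * s)))
        (-σ * Real.exp (-(σ * t))) t := by
      simpa [mul_comm] using h0.exp
    exact (hVderiv t ht).mul he
  have hgnonpos : ∀ t ≥ t₁,
      (∑ i, p i * ∑ j, Mt t i j * x t j) * Real.exp (-(σ * t))
        + V t * (-σ * Real.exp (-(σ * t))) ≤ 0 := by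
    intro t ht
    have he : (0:ℝ) < Real.exp (-(σ * t)) := Real.exp_pos _
    have h1 : (∑ i, p i * ∑ j, Mt t i j * x t j) * Real.exp (-(σ * t))
        ≤ σ * V t * Real.exp (-(σ * t)) :=
      mul_le_mul_of_nonneg_right (hVbound t ht) he.le
    nlinarith [h1]
  have hanti : AntitoneOn g (Set.Ici t₁) := by
    refine antitoneOn_of_deriv_nonpos (convex_Ici t₁) ?_ ?_ ?_
    · intro t ht
      exact ((hgderiv t ht).continuousAt).continuousWithinAt
    · intro t ht
      rw [interior_Ici] at ht
      exact ((hgderiv t ht.le).differentiableAt).differentiableWithinAt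
    · intro t ht
      rw [interior_Ici] at ht
      rw [(hgderiv t ht.le).deriv]
      exact hgnonpos t ht.le
  have hmain : ∀ t ≥ t₁, V t ≤ V t₁ * Real.exp (σ * (t - t₁)) := by
    intro t ht
    have hgt : g t ≤ g t₁ := hanti (Set.self_mem_Ici) (Set.mem_Ici.2 ht) ht
    have hstep : V t * Real.exp (-(σ * t)) * Real.exp (σ * t)
        ≤ V t₁ * Real.exp (-(σ * t₁)) * Real.exp (σ * t) :=
      mul_le_mul_of_nonneg_right hgt (Real.exp_pos _).le
    calc V t = V t * Real.exp (-(σ * t)) * Real.exp (σ * t) := by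
          rw [mul_assoc, ← Real.exp_add]; simp
      _ ≤ V t₁ * Real.exp (-(σ * t₁)) * Real.exp (σ * t) := hstep
      _ = V t₁ * Real.exp (σ * (t - t₁)) := by
          rw [mul_assoc, ← Real.exp_add]; ring_nf
  refine ⟨hmain, ?_⟩
  intro hσneg i
  have hub : ∀ t ≥ t₁, x t i ≤ V t₁ * Real.exp (σ * (t - t₁)) / p i := by
    intro t ht
    have h1 : p i * x t i ≤ V t := by
      refine Finset.single_le_sum (f := fun j => p j * x t j) ?_ (Finset.mem_univ i)
      intro j _
      exact mul_nonneg (hp j).le (hxnn t ht j)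
    have h2 : p i * x t i ≤ V t₁ * Real.exp (σ * (t - t₁)) := h1.trans (hmain t ht)
    rw [le_div_iff₀ (hp i)]
    linarith [h2]
  have hlim : Tendsto (fun t => V t₁ * Real.exp (σ * (t - t₁)) / p i) atTop (nhds 0) := by
    have hb : Tendsto (fun t : ℝ => σ * (t - t₁)) atTop atBot := by
      have h1 : Tendsto (fun t : ℝ => t - t₁) atTop atTop :=
        tendsto_atTop_add_const_right _ _ tendsto_id
      have h2 : Tendsto (fun t : ℝ => (-σ) * (t - t₁)) atTop atTop :=
        h1.const_mul_atTop (by linarith)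
      have h3 : Tendsto (fun t : ℝ => -((-σ) * (t - t₁))) atTop atBot :=
        tendsto_neg_atBot_iff.2 h2
      simpa using h3
    have hexp : Tendsto (fun t : ℝ => Real.exp (σ * (t - t₁))) atTop (nhds 0) :=
      Real.tendsto_exp_atBot.comp hb
    have := (hexp.const_mul (V t₁)).div_const (p i)
    simpa using this
  refine tendsto_of_tendsto_of_tendsto_of_le_of_le' tendsto_const_nhds hlim ?_ ?_
  · filter_upwards [eventually_ge_atTop t₁] with t ht
    exact hxnn t ht i
  · filter_upwards [eventually_ge_atTop t₁] with t ht
    exact hub t ht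
end

section
/- In the coupled SIR-opinion system, if the infected state converges to zero and the susceptible state converges to some $s_e \in [0,1]^n$ exponentially fast, then the opinion state $o(t)$ converges exponentially fast to $o_e = (\bar{L}+I_n)^{-1}(\mathbf{1}_n - s_e)$. -/
open Matrix Filter Topology

lemma keyNormIneq {n : ℕ} (L : Matrix (Fin n) (Fin n) ℝ)
    (hdiag : ∀ i, L i i = ∑ j ∈ Finset.univ.erase i, |L i j|)
    (v u : Fin n → ℝ) {h : ℝ} (hh0 : 0 ≤ h) (hh2 : h ≤ 1)
    (hh1 : ∀ i, h * (1 + L i i) ≤ 1) :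
    ‖v + h • (u - (L + 1).mulVec v)‖ ≤ (1 - h) * ‖v‖ + h * ‖u‖ := by
  have hvn : (0:ℝ) ≤ ‖v‖ := norm_nonneg _
  have hun : (0:ℝ) ≤ ‖u‖ := norm_nonneg _
  have hrhs : 0 ≤ (1 - h) * ‖v‖ + h * ‖u‖ := by
    have : 0 ≤ 1 - h := by linarith
    positivity
  rw [pi_norm_le_iff_of_nonneg hrhs]
  intro i
  have hvi : |v i| ≤ ‖v‖ := norm_le_pi_norm v i
  have hui : |u i| ≤ ‖u‖ := norm_le_pi_norm u i
  have hmv : (L + 1).mulVec v i = (∑ j, L i j * v j) + v i := by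
    simp only [Matrix.mulVec, dotProduct, Matrix.add_apply, Matrix.one_apply, ite_mul,
      add_mul, one_mul, zero_mul, Finset.sum_add_distrib, Finset.sum_ite_eq, Finset.mem_univ,
      if_true]
  have hsplit : ∑ j, L i j * v j = L i i * v i + ∑ j ∈ Finset.univ.erase i, L i j * v j := by
    rw [← Finset.sum_erase_add _ _ (Finset.mem_univ i)]; ring
  have hfac : 0 ≤ 1 - h - h * L i i := by have := hh1 i; linarith
  have hSi : |∑ j ∈ Finset.univ.erase i, L i j * v j| ≤ L i i * ‖v‖ := by
    calc |∑ j ∈ Finset.univ.erase i, L i j * v j|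
        ≤ ∑ j ∈ Finset.univ.erase i, |L i j * v j| := Finset.abs_sum_le_sum_abs _ _
      _ ≤ ∑ j ∈ Finset.univ.erase i, |L i j| * ‖v‖ := by
          refine Finset.sum_le_sum fun j _ => ?_
          rw [abs_mul]
          exact mul_le_mul_of_nonneg_left (norm_le_pi_norm v j) (abs_nonneg _)
      _ = L i i * ‖v‖ := by rw [← Finset.sum_mul, ← hdiag i]
  have hval : (v + h • (u - (L + 1).mulVec v)) i
      = (1 - h - h * L i i) * v i - h * (∑ j ∈ Finset.univ.erase i, L i j * v j) + h * u i := by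
    simp only [Pi.add_apply, Pi.smul_apply, Pi.sub_apply, smul_eq_mul, hmv, hsplit]
    ring
  rw [Real.norm_eq_abs, hval]
  calc |(1 - h - h * L i i) * v i - h * (∑ j ∈ Finset.univ.erase i, L i j * v j) + h * u i|
      ≤ |(1 - h - h * L i i) * v i| + |h * (∑ j ∈ Finset.univ.erase i, L i j * v j)| + |h * u i| := by
        exact (abs_add_le _ _).trans (by gcongr; exact abs_sub _ _)
    _ ≤ (1 - h - h * L i i) * ‖v‖ + h * (L i i * ‖v‖) + h * ‖u‖ := by
        gcongr ?_ + ?_ + ?_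
        · rw [abs_mul, abs_of_nonneg hfac]; exact mul_le_mul_of_nonneg_left hvi hfac
        · rw [abs_mul, abs_of_nonneg hh0]; exact mul_le_mul_of_nonneg_left hSi hh0
        · rw [abs_mul, abs_of_nonneg hh0]; exact mul_le_mul_of_nonneg_left hui hh0
    _ = (1 - h) * ‖v‖ + h * ‖u‖ := by ring

lemma expDecayAux {n : ℕ} (L : Matrix (Fin n) (Fin n) ℝ)
    (hdiag : ∀ i, L i i = ∑ j ∈ Finset.univ.erase i, |L i j|)
    (e u : ℝ → Fin n → ℝ)
    (hder : ∀ t, 0 ≤ t → HasDerivAt e (u t - (L + 1).mulVec (e t)) t)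
    (C' a : ℝ) (hC' : 0 ≤ C') (ha : 0 < a)
    (hu : ∀ t, 0 ≤ t → ‖u t‖ ≤ C' * Real.exp (-a * t)) :
    ∃ M c : ℝ, 0 < c ∧ ∀ t ≥ (0:ℝ), ‖e t‖ ≤ M * Real.exp (-c * t) := by
  have hLnn : ∀ i, 0 ≤ L i i := fun i =>
    (hdiag i) ▸ Finset.sum_nonneg fun j _ => abs_nonneg _
  obtain ⟨c, hc0, hca, hc1⟩ : ∃ c : ℝ, 0 < c ∧ c < a ∧ c ≤ 1 / 2 := by
    refine ⟨min a 1 / 2, ?_, ?_, ?_⟩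
    · have := lt_min ha one_pos; positivity
    · have h1 : min a 1 ≤ a := min_le_left _ _
      have := lt_min ha one_pos
      linarith
    · have : min a 1 ≤ 1 := min_le_right _ _
      linarith
  obtain ⟨K, hK0, hLK⟩ : ∃ K : ℝ, 0 ≤ K ∧ ∀ i, L i i ≤ K := by
    refine ⟨∑ i, ∑ j, |L i j|,
      Finset.sum_nonneg fun i _ => Finset.sum_nonneg fun j _ => abs_nonneg _, fun i => ?_⟩
    calc L i i ≤ |L i i| := le_abs_self _
      _ ≤ ∑ j, |L i j| :=
          Finset.single_le_sum (f := fun j => |L i j|) (fun j _ => abs_nonneg _)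
            (Finset.mem_univ i)
      _ ≤ ∑ i, ∑ j, |L i j| := Finset.single_le_sum (f := fun i => ∑ j, |L i j|)
          (fun i _ => Finset.sum_nonneg fun j _ => abs_nonneg _) (Finset.mem_univ i)
  obtain ⟨h0, hh0pos, hh0le1, hh0K⟩ :
      ∃ h0 : ℝ, 0 < h0 ∧ h0 ≤ 1 ∧ h0 * (1 + K) ≤ 1 := by
    refine ⟨1 / (1 + K), by positivity, ?_, ?_⟩
    · rw [div_le_one (by linarith)]; linarith
    · rw [div_mul_cancel₀]; linarith
  obtain ⟨M, hM1, hMpos, hM2⟩ :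
      ∃ M : ℝ, ‖e 0‖ ≤ M ∧ 0 < M ∧ C' < (1 - c) * M := by
    refine ⟨max ‖e 0‖ (2 * C' + 1), le_max_left _ _, ?_, ?_⟩
    · exact lt_of_lt_of_le (by linarith) (le_max_right _ _)
    · have h1 : 2 * C' + 1 ≤ max ‖e 0‖ (2 * C' + 1) := le_max_right _ _
      nlinarith
  refine ⟨M, c, hc0, ?_⟩
  intro T hT
  have hB : ∀ t : ℝ, HasDerivAt (fun t => M * Real.exp (-c * t))
      (M * (Real.exp (-c * t) * -c)) t := by
    intro t
    have h1 : HasDerivAt (fun t : ℝ => -c * t) (-c) t := by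
      simpa using (hasDerivAt_id t).const_mul (-c)
    exact ((Real.hasDerivAt_exp (-c * t)).comp t h1).const_mul M
  have hcont : ContinuousOn (fun t => ‖e t‖) (Set.Icc 0 T) := fun y hy =>
    ((hder y hy.1).continuousAt.norm).continuousWithinAt
  have hf' : ∀ y ∈ Set.Ico 0 T, ∀ r,
      (fun t => -‖e t‖ + C' * Real.exp (-a * t)) y < r →
      ∃ᶠ z in 𝓝[>] y, slope (fun t => ‖e t‖) y z < r := by
    intro y hy r hr
    simp only at hr
    apply Eventually.frequently
    have hlo := hasDerivAt_iff_isLittleO.mp (hder y hy.1)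
    have hεpos : 0 < (r - (-‖e y‖ + C' * Real.exp (-a * y))) / 2 := by linarith
    have h1 := hlo.def hεpos
    have h2 : ∀ᶠ z in 𝓝 y, z - y < h0 := by
      filter_upwards [Iio_mem_nhds (show y < y + h0 by linarith)] with z hz
      simp only [Set.mem_Iio] at hz; linarith
    filter_upwards [h1.filter_mono nhdsWithin_le_nhds, h2.filter_mono nhdsWithin_le_nhds,
      self_mem_nhdsWithin] with z hz1 hz2 hz3
    have hzy : 0 < z - y := sub_pos.mpr hz3
    have hle1 : z - y ≤ 1 := by linarith
    have hh1 : ∀ i, (z - y) * (1 + L i i) ≤ 1 := by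
      intro i
      calc (z - y) * (1 + L i i) ≤ h0 * (1 + K) := by
            apply mul_le_mul (le_of_lt hz2) (by linarith [hLK i]) (by linarith [hLnn i])
              hh0pos.le
        _ ≤ 1 := hh0K
    have hkey : ‖e y + (z - y) • (u y - (L + 1).mulVec (e y))‖
        ≤ (1 - (z - y)) * ‖e y‖ + (z - y) * ‖u y‖ :=
      keyNormIneq L hdiag (e y) (u y) hzy.le hle1 hh1
    have hsplit : e z = (e y + (z - y) • (u y - (L + 1).mulVec (e y)))
        + (e z - e y - (z - y) • (u y - (L + 1).mulVec (e y))) := by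
      ext i
      simp only [Pi.add_apply, Pi.sub_apply, Pi.smul_apply, smul_eq_mul]
      ring
    have hfz : ‖e z‖ ≤ (1 - (z - y)) * ‖e y‖ + (z - y) * ‖u y‖
        + (r - (-‖e y‖ + C' * Real.exp (-a * y))) / 2 * (z - y) := by
      calc ‖e z‖ = ‖(e y + (z - y) • (u y - (L + 1).mulVec (e y)))
            + (e z - e y - (z - y) • (u y - (L + 1).mulVec (e y)))‖ := congrArg _ hsplit
        _ ≤ ‖e y + (z - y) • (u y - (L + 1).mulVec (e y))‖
            + ‖e z - e y - (z - y) • (u y - (L + 1).mulVec (e y))‖ := norm_add_le _ _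
        _ ≤ ((1 - (z - y)) * ‖e y‖ + (z - y) * ‖u y‖)
            + (r - (-‖e y‖ + C' * Real.exp (-a * y))) / 2 * ‖z - y‖ := by
            gcongr
        _ = _ := by rw [Real.norm_eq_abs, abs_of_pos hzy]
    have hun : ‖u y‖ ≤ C' * Real.exp (-a * y) := hu y hy.1
    have step1 : (z - y) * ‖u y‖ ≤ (z - y) * (C' * Real.exp (-a * y)) :=
      mul_le_mul_of_nonneg_left hun hzy.le
    have step2 : (z - y) * (-‖e y‖ + C' * Real.exp (-a * y)
        + (r - (-‖e y‖ + C' * Real.exp (-a * y))) / 2) < (z - y) * r := by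
      apply mul_lt_mul_of_pos_left _ hzy
      linarith
    rw [slope_def_field, div_lt_iff₀ hzy]
    nlinarith [hfz, step1, step2]
  have hbound : ∀ y ∈ Set.Ico 0 T, ‖e y‖ = M * Real.exp (-c * y) →
      (fun t => -‖e t‖ + C' * Real.exp (-a * t)) y < M * (Real.exp (-c * y) * -c) := by
    intro y hy hfB
    simp only
    have hex : Real.exp (-a * y) ≤ Real.exp (-c * y) := by
      apply Real.exp_le_exp.mpr
      nlinarith [hy.1]
    have hlt : C' * Real.exp (-a * y) < (1 - c) * (M * Real.exp (-c * y)) := by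
      calc C' * Real.exp (-a * y) ≤ C' * Real.exp (-c * y) :=
            mul_le_mul_of_nonneg_left hex hC'
        _ < (1 - c) * M * Real.exp (-c * y) := mul_lt_mul_of_pos_right hM2 (Real.exp_pos _)
        _ = (1 - c) * (M * Real.exp (-c * y)) := by ring
    rw [hfB]
    nlinarith
  have ha0 : ‖e 0‖ ≤ M * Real.exp (-c * 0) := by simpa using hM1
  exact image_le_of_liminf_slope_right_lt_deriv_boundary hcont hf' ha0 hB hbound
    (Set.right_mem_Icc.mpr hT)


/-- if the infected state converges to zero and the susceptible state
converges to `s_e` exponentially fast, then the opinion state converges exponentially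
fast to `o_e = (L̄+I)⁻¹(1 - s_e)`. -/
theorem opinion_converges_exponentially {n : ℕ}
    (L : Matrix (Fin n) (Fin n) ℝ) (hL : IsLaplacian L) (hirr : MatIrreducible L)
    (s x o : ℝ → Fin n → ℝ) (se : Fin n → ℝ)
    -- the infected state converges to zero exponentially fast
    (hx : ∃ C a : ℝ, 0 < a ∧ ∀ t ≥ (0:ℝ), ∀ i, |x t i| ≤ C * Real.exp (-a * t))
    -- the susceptible state converges to `s_e` exponentially fast
    (hs : ∃ C a : ℝ, 0 < a ∧ ∀ t ≥ (0:ℝ), ∀ i, |s t i - se i| ≤ C * Real.exp (-a * t))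
    -- opinion dynamics `ȯ = (1 - s) - (L̄+I)o`
    (hdo : ∀ t ≥ (0:ℝ), ∀ i, HasDerivAt (fun τ => o τ i)
      ((1 - s t i) - ((L + 1).mulVec (o t)) i) t) :
    (L + 1).mulVec ((L + 1)⁻¹.mulVec ((fun _ => 1) - se)) = (fun _ => 1) - se ∧
    ∃ C c : ℝ, 0 < c ∧ ∀ t ≥ (0:ℝ), ∀ i,
      |o t i - (L + 1)⁻¹.mulVec ((fun _ => 1) - se) i| ≤ C * Real.exp (-c * t) := by
  classical
  have hdiag : ∀ i, L i i = ∑ j ∈ Finset.univ.erase i, |L i j| := by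
    intro i
    have h0 := hL.2 i
    rw [← Finset.sum_erase_add _ _ (Finset.mem_univ i)] at h0
    have h1 : ∑ j ∈ Finset.univ.erase i, |L i j| = -∑ j ∈ Finset.univ.erase i, L i j := by
      rw [← Finset.sum_neg_distrib]
      refine Finset.sum_congr rfl fun j hj => ?_
      exact abs_of_nonpos (hL.1 i j (Ne.symm (Finset.ne_of_mem_erase hj)))
    linarith
  have hLnn : ∀ i, 0 ≤ L i i := fun i =>
    (hdiag i) ▸ Finset.sum_nonneg fun j _ => abs_nonneg _
  have hdet : (L + 1).det ≠ 0 := by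
    apply det_ne_zero_of_sum_row_lt_diag
    intro k
    have e1 : ∀ j ∈ Finset.univ.erase k, ‖(L + 1) k j‖ = |L k j| := by
      intro j hj
      have hjk : j ≠ k := Finset.ne_of_mem_erase hj
      simp [Matrix.add_apply, Matrix.one_apply_ne (Ne.symm hjk), Real.norm_eq_abs]
    rw [Finset.sum_congr rfl e1]
    have e2 : ‖(L + 1) k k‖ = L k k + 1 := by
      have : (0:ℝ) ≤ L k k + 1 := by linarith [hLnn k]
      simp [Matrix.add_apply, Matrix.one_apply_eq, Real.norm_eq_abs, abs_of_nonneg this]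
    rw [e2, ← hdiag k]; linarith
  have hsolve : (L + 1).mulVec ((L + 1)⁻¹.mulVec ((fun _ => 1) - se)) = (fun _ => 1) - se := by
    rw [Matrix.mulVec_mulVec, Matrix.mul_nonsing_inv _ (isUnit_iff_ne_zero.mpr hdet),
      Matrix.one_mulVec]
  refine ⟨hsolve, ?_⟩
  obtain ⟨C, a, ha, hsb⟩ := hs
  have hder : ∀ t, (0:ℝ) ≤ t →
      HasDerivAt (fun τ i => o τ i - (L + 1)⁻¹.mulVec ((fun _ => 1) - se) i)
        ((fun i => se i - s t i)
          - (L + 1).mulVec (fun i => o t i - (L + 1)⁻¹.mulVec ((fun _ => 1) - se) i)) t := by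
    intro t ht
    rw [hasDerivAt_pi]
    intro i
    have h1 := (hdo t ht i).sub_const ((L + 1)⁻¹.mulVec ((fun _ => 1) - se) i)
    convert h1 using 1
    have h2 : (L + 1).mulVec (fun i => o t i - (L + 1)⁻¹.mulVec ((fun _ => 1) - se) i)
        = (L + 1).mulVec (o t) - (L + 1).mulVec ((L + 1)⁻¹.mulVec ((fun _ => 1) - se)) := by
      rw [← Matrix.mulVec_sub]; rfl
    have h3 := congrFun hsolve i
    simp only [Pi.sub_apply] at h3
    simp only [h2, Pi.sub_apply]
    linarith
  have hu : ∀ t, (0:ℝ) ≤ t →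
      ‖(fun i => se i - s t i : Fin n → ℝ)‖ ≤ max C 0 * Real.exp (-a * t) := by
    intro t ht
    rw [pi_norm_le_iff_of_nonneg (by positivity)]
    intro i
    rw [Real.norm_eq_abs]
    calc |se i - s t i| = |s t i - se i| := abs_sub_comm _ _
      _ ≤ C * Real.exp (-a * t) := hsb t ht i
      _ ≤ max C 0 * Real.exp (-a * t) :=
          mul_le_mul_of_nonneg_right (le_max_left _ _) (Real.exp_nonneg _)
  obtain ⟨M, c, hc0, hM⟩ := expDecayAux L hdiag
    (fun τ i => o τ i - (L + 1)⁻¹.mulVec ((fun _ => 1) - se) i)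
    (fun t i => se i - s t i) hder (max C 0) a (le_max_right _ _) ha hu
  refine ⟨M, c, hc0, ?_⟩
  intro t ht i
  calc |o t i - (L + 1)⁻¹.mulVec ((fun _ => 1) - se) i|
      ≤ ‖(fun i => o t i - (L + 1)⁻¹.mulVec ((fun _ => 1) - se) i : Fin n → ℝ)‖ := by
        simpa [Real.norm_eq_abs] using
          norm_le_pi_norm (fun i => o t i - (L + 1)⁻¹.mulVec ((fun _ => 1) - se) i : Fin n → ℝ) i
    _ ≤ M * Real.exp (-c * t) := hM t ht
end
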